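/- Let E be a real inner product space, C ⊆ E a nonempty convex set, r ∈ E a point with r ∉ C, and c ∈ C a nearest point of C to r, i.e., dist(r, c) ≤ dist(r, p) for every p ∈ C. Then for every point z on the segment joining c to r with z ≠ r, and for every p ∈ C, one has dist(z, p) < dist(r, p). (Moving the relay from a point outside the convex hull toward its nearest point in the hull strictly decreases the distance to every point of the hull.) -/

import Mathlib

open RealInnerProductSpace

/-- Moving a relay from a point `r` outside a convex set `C` toward the nearest point
`c ∈ C` strictly decreases the distance to every point of `C`. -/
theorem segment_toward_nearest_point_strictly_decreases_dist
    {E : Type*} [NormedAddCommGroup E] [InnerProductSpace ℝ E]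
    (C : Set E) (hC : Convex ℝ C) (hCne : C.Nonempty)
    (r : E) (hr : r ∉ C)
    (c : E) (hc : c ∈ C) (hmin : ∀ p ∈ C, dist r c ≤ dist r p)
    (z : E) (hz : z ∈ segment ℝ c r) (hzr : z ≠ r)
    (p : E) (hp : p ∈ C) :
    dist z p < dist r p := by
  -- variational inequality
  have hninf : ‖r - c‖ = ⨅ w : C, ‖r - w‖ := by
    haveI : Nonempty C := ⟨⟨c, hc⟩⟩
    refine le_antisymm (le_ciInf fun w => ?_) (ciInf_le (f := fun w : C => ‖r - (w : E)‖) ⟨0, by rintro _ ⟨w, rfl⟩; exact norm_nonneg _⟩ ⟨c, hc⟩)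
    simpa [dist_eq_norm] using hmin w w.2
  have key : ⟪r - c, p - c⟫ ≤ 0 :=
    (norm_eq_iInf_iff_real_inner_le_zero hC hc).1 hninf p hp
  have hrc : r ≠ c := fun h => hr (h ▸ hc)
  rw [segment_eq_image'] at hz
  obtain ⟨t, ht, hzt⟩ := hz
  have ht1 : t < 1 := by
    rcases lt_or_eq_of_le ht.2 with h | h
    · exact h
    · exfalso; apply hzr; rw [← hzt]; subst h; simp
  have hrc0 : r - c ≠ 0 := sub_ne_zero.2 hrc
  have hne : ‖r - c‖ ^ 2 > 0 := pow_pos (norm_pos_iff.2 hrc0) 2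
  have hzp : z - p = (c - p) + t • (r - c) := by rw [← hzt]; dsimp only; abel
  have hrp : r - p = (c - p) + (1:ℝ) • (r - c) := by rw [one_smul]; abel
  have expand : ∀ s : ℝ, ‖(c - p) + s • (r - c)‖ ^ 2
      = ‖c - p‖ ^ 2 + 2 * s * ⟪c - p, r - c⟫ + s ^ 2 * ‖r - c‖ ^ 2 := by
    intro s
    rw [← real_inner_self_eq_norm_sq, ← real_inner_self_eq_norm_sq,
      ← real_inner_self_eq_norm_sq]
    rw [inner_add_add_self, real_inner_smul_left, real_inner_smul_right,
      real_inner_smul_left, real_inner_smul_right, real_inner_comm (r - c) (c - p)]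
    ring
  have hip : ⟪c - p, r - c⟫ = -⟪r - c, p - c⟫ := by
    rw [real_inner_comm, show c - p = -(p - c) by abel, inner_neg_right]
  have hsq : ‖z - p‖ ^ 2 < ‖r - p‖ ^ 2 := by
    rw [hzp, hrp, expand, expand, hip]
    have hA : (0:ℝ) ≤ (1 - t) * (-⟪r - c, p - c⟫) :=
      mul_nonneg (by linarith) (by linarith)
    have hB : (0:ℝ) < (1 - t) * ‖r - c‖ ^ 2 := mul_pos (by linarith) hne
    nlinarith [mul_nonneg ht.1 hB.le]
  rw [dist_eq_norm, dist_eq_norm]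
  nlinarith [norm_nonneg (z - p), norm_nonneg (r - p), hsq]
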